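/- Let γ ∈ (0,2), k ∈ ℕ, and let s : Fin k → ℝ with s_i ≥ 0 for all i. Then the k×k matrix with entries Ψ_γ(s_i, s_j) = (1/2)(s_i^γ + s_j^γ − |s_i − s_j|^γ) is positive semidefinite, and its entrywise (Hadamard) square, with entries (Ψ_γ(s_i,s_j))², is also positive semidefinite. Consequently Γ_{γ,2}(f,f) ≥ 0 for every positive-frequency trigonometric polynomial f, i.e. the γ-stable semigroup on the torus satisfies CD(0,∞) on such polynomials. -/

import Mathlib

/-- The Fourier-space carré du champ kernel of the γ-stable generator. -/
noncomputable def Psi (γ ξ η : ℝ) : ℝ :=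
  (1 / 2) * (|ξ| ^ γ + |η| ^ γ - |ξ - η| ^ γ)

open MeasureTheory Set Real Matrix

lemma gker_cont (γ a : ℝ) :
    ContinuousOn (fun u : ℝ => (1 - Real.cos (a * u)) * u ^ (-1 - γ)) (Set.Ioi 0) :=
  ((continuous_const.sub (Real.continuous_cos.comp
    (continuous_const.mul continuous_id))).continuousOn).mul
    (ContinuousOn.rpow_const continuousOn_id (fun x hx => Or.inl (ne_of_gt hx)))

lemma integrable_gker {γ : ℝ} (hγ0 : 0 < γ) (hγ2 : γ < 2) (a : ℝ) :
    IntegrableOn (fun u : ℝ => (1 - Real.cos (a * u)) * u ^ (-1 - γ)) (Set.Ioi 0) := by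
  have hcont := gker_cont γ a
  rw [← Set.Ioo_union_Ici_eq_Ioi (zero_lt_one)]
  apply IntegrableOn.union
  · -- on Ioo 0 1 : dominate by (a^2/2) * u ^ (1 - γ)
    have hg : IntegrableOn (fun u : ℝ => (a ^ 2 / 2) * u ^ (1 - γ)) (Set.Ioo (0:ℝ) 1) := by
      apply Integrable.const_mul
      show IntegrableOn _ _ _
      rw [intervalIntegral.integrableOn_Ioo_rpow_iff zero_lt_one]
      linarith
    refine Integrable.mono' hg ((hcont.mono (Set.Ioo_subset_Ioi_self)).aestronglyMeasurable
      measurableSet_Ioo) ?_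
    rw [ae_restrict_iff' measurableSet_Ioo]
    filter_upwards with u hu
    obtain ⟨hu0, hu1⟩ := hu
    have hcos1 : 1 - Real.cos (a * u) ≤ (a * u) ^ 2 / 2 := by
      have := Real.one_sub_sq_div_two_le_cos (x := a * u)
      linarith
    have hcos0 : 0 ≤ 1 - Real.cos (a * u) := by
      have := Real.cos_le_one (a * u); linarith
    have hrp : (0:ℝ) ≤ u ^ (-1 - γ) := Real.rpow_nonneg hu0.le _
    rw [Real.norm_eq_abs, abs_mul, abs_of_nonneg hcos0, abs_of_nonneg hrp]
    have key : (a * u) ^ 2 / 2 * u ^ (-1 - γ) = a ^ 2 / 2 * u ^ (1 - γ) := by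
      have : u ^ (1 - γ) = u ^ (2:ℝ) * u ^ (-1 - γ) := by
        rw [← Real.rpow_add hu0]; ring_nf
      rw [this, Real.rpow_two]; ring
    calc (1 - Real.cos (a * u)) * u ^ (-1 - γ)
        ≤ (a * u) ^ 2 / 2 * u ^ (-1 - γ) := by
          exact mul_le_mul_of_nonneg_right hcos1 hrp
      _ = a ^ 2 / 2 * u ^ (1 - γ) := key
  · -- on Ici 1 : dominate by 2 * u ^ (-1 - γ)
    have hg : IntegrableOn (fun u : ℝ => 2 * u ^ (-1 - γ)) (Set.Ici (1:ℝ)) := by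
      apply Integrable.const_mul
      show IntegrableOn _ _ _
      rw [integrableOn_Ici_iff_integrableOn_Ioi, integrableOn_Ioi_rpow_iff zero_lt_one]
      linarith
    refine Integrable.mono' hg ((hcont.mono (fun x (hx : x ∈ Set.Ici (1:ℝ)) => lt_of_lt_of_le (zero_lt_one' ℝ) hx)).aestronglyMeasurable
      measurableSet_Ici) ?_
    rw [ae_restrict_iff' measurableSet_Ici]
    filter_upwards with u hu
    have hu0 : (0:ℝ) < u := lt_of_lt_of_le zero_lt_one hu
    have hcos0 : 0 ≤ 1 - Real.cos (a * u) := by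
      have := Real.cos_le_one (a * u); linarith
    have hcos2 : 1 - Real.cos (a * u) ≤ 2 := by
      have := Real.neg_one_le_cos (a * u); linarith
    have hrp : (0:ℝ) ≤ u ^ (-1 - γ) := Real.rpow_nonneg hu0.le _
    rw [Real.norm_eq_abs, abs_mul, abs_of_nonneg hcos0, abs_of_nonneg hrp]
    exact mul_le_mul_of_nonneg_right hcos2 hrp

noncomputable def Cgam (γ : ℝ) : ℝ := ∫ u in Set.Ioi (0:ℝ), (1 - Real.cos u) * u ^ (-1 - γ)

lemma integral_gker {γ : ℝ} (hγ0 : 0 < γ) (a : ℝ) :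
    ∫ u in Set.Ioi (0:ℝ), (1 - Real.cos (a * u)) * u ^ (-1 - γ) = |a| ^ γ * Cgam γ := by
  rcases eq_or_ne a 0 with rfl | ha
  · simp [Real.zero_rpow (ne_of_gt hγ0)]
  · have hb : (0:ℝ) < |a| := abs_pos.mpr ha
    have h1 : ∫ u in Set.Ioi (0:ℝ), (1 - Real.cos (a * u)) * u ^ (-1 - γ)
        = ∫ u in Set.Ioi (0:ℝ), |a| ^ (1 + γ) *
            ((1 - Real.cos (|a| * u)) * (|a| * u) ^ (-1 - γ)) := by
      refine setIntegral_congr_fun measurableSet_Ioi (fun u hu => ?_)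
      have hu0 : (0:ℝ) < u := hu
      have hcos : Real.cos (a * u) = Real.cos (|a| * u) := by
        rcases abs_choice a with h | h
        · rw [h]
        · rw [h]; rw [neg_mul, Real.cos_neg]
      rw [hcos, Real.mul_rpow hb.le hu0.le]
      have hpow : |a| ^ (1 + γ) * |a| ^ (-1 - γ) = 1 := by
        rw [← Real.rpow_add hb]; norm_num
      linear_combination (-((1 - Real.cos (|a| * u)) * u ^ (-1 - γ))) * hpow
    rw [h1, MeasureTheory.integral_const_mul,
      MeasureTheory.integral_comp_mul_left_Ioi
        (fun x => (1 - Real.cos x) * x ^ (-1 - γ)) 0 hb, mul_zero]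
    rw [smul_eq_mul, ← mul_assoc]
    congr 1
    rw [← Real.rpow_neg_one |a|, ← Real.rpow_add hb]
    congr 1
    ring

lemma Cgam_pos {γ : ℝ} (hγ0 : 0 < γ) (hγ2 : γ < 2) : 0 < Cgam γ := by
  have hInt : IntegrableOn (fun u : ℝ => (1 - Real.cos u) * u ^ (-1 - γ)) (Set.Ioi 0) := by
    simpa using integrable_gker hγ0 hγ2 1
  have hsub : Set.Ioc (1:ℝ) 2 ⊆ Set.Ioi 0 := fun x hx => lt_trans zero_lt_one hx.1
  have hIoc : IntegrableOn (fun u : ℝ => (1 - Real.cos u) * u ^ (-1 - γ)) (Set.Ioc 1 2) :=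
    hInt.mono_set hsub
  have c_pos : (0:ℝ) < (1 - Real.cos 1) * 2 ^ (-1 - γ) := by
    have h1 : Real.cos 1 < 1 := by
      have hb := Real.cos_le_one_sub_mul_cos_sq (x := 1)
        (by rw [abs_one]; linarith [Real.pi_gt_three])
      have hp : (0:ℝ) < 2 / Real.pi ^ 2 := by positivity
      nlinarith
    have h2 : (0:ℝ) < (2:ℝ) ^ (-1 - γ) := Real.rpow_pos_of_pos two_pos _
    exact mul_pos (by linarith) h2
  have lb : ∫ u in Set.Ioc (1:ℝ) 2, (1 - Real.cos 1) * 2 ^ (-1 - γ)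
      ≤ ∫ u in Set.Ioc (1:ℝ) 2, (1 - Real.cos u) * u ^ (-1 - γ) := by
    refine setIntegral_mono_on (integrableOn_const (by simp)) hIoc
      measurableSet_Ioc (fun u hu => ?_)
    have hu1 : (1:ℝ) ≤ u := hu.1.le
    have hu2 : u ≤ 2 := hu.2
    have hu0 : (0:ℝ) < u := lt_of_lt_of_le zero_lt_one hu1
    have hpi : u ≤ Real.pi := le_trans hu2 (by linarith [Real.pi_gt_three])
    have hc : Real.cos u ≤ Real.cos 1 :=
      Real.cos_le_cos_of_nonneg_of_le_pi zero_le_one hpi hu1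
    have hr : (2:ℝ) ^ (-1 - γ) ≤ u ^ (-1 - γ) :=
      Real.rpow_le_rpow_of_nonpos hu0 hu2 (by linarith)
    have h1c : (0:ℝ) ≤ 1 - Real.cos 1 := by
      have := Real.cos_le_one 1; linarith
    exact mul_le_mul (by linarith) hr (Real.rpow_pos_of_pos two_pos _).le (by linarith)
  have hvol : (volume (Set.Ioc (1:ℝ) 2)).toReal = 1 := by
    simp [Real.volume_Ioc]; norm_num
  rw [setIntegral_const, measureReal_def, hvol, one_smul] at lb
  have lb2 : ∫ u in Set.Ioc (1:ℝ) 2, (1 - Real.cos u) * u ^ (-1 - γ) ≤ Cgam γ := by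
    refine setIntegral_mono_set hInt ?_ (HasSubset.Subset.eventuallyLE hsub)
    filter_upwards [ae_restrict_mem measurableSet_Ioi] with u hu
    have hu0 : (0:ℝ) < u := hu
    have h1 : (0:ℝ) ≤ 1 - Real.cos u := by have := Real.cos_le_one u; linarith
    exact mul_nonneg h1 (Real.rpow_nonneg hu0.le _)
  linarith [lt_of_lt_of_le c_pos lb]

lemma quad_sum_sq {k : ℕ} (x A B : Fin k → ℝ) :
    ∑ i, ∑ j, x i * x j * (A i * A j + B i * B j)
      = (∑ i, x i * A i) ^ 2 + (∑ i, x i * B i) ^ 2 := by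
  rw [sq, sq, Finset.sum_mul_sum, Finset.sum_mul_sum, ← Finset.sum_add_distrib]
  refine Finset.sum_congr rfl fun i _ => ?_
  rw [← Finset.sum_add_distrib]
  exact Finset.sum_congr rfl fun j _ => by ring

lemma key_rep {γ : ℝ} (hγ0 : 0 < γ) (hγ2 : γ < 2) (a b : ℝ) :
    Cgam γ * Psi γ a b = ∫ u in Set.Ioi (0:ℝ),
      (1/2) * ((1 - Real.cos (a * u)) * u ^ (-1 - γ) + (1 - Real.cos (b * u)) * u ^ (-1 - γ)
        - (1 - Real.cos ((a - b) * u)) * u ^ (-1 - γ)) := by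
  have hA := integrable_gker hγ0 hγ2 a
  have hB := integrable_gker hγ0 hγ2 b
  have hC := integrable_gker hγ0 hγ2 (a - b)
  rw [MeasureTheory.integral_const_mul,
    MeasureTheory.integral_sub
      (f := fun u : ℝ => (1 - Real.cos (a * u)) * u ^ (-1 - γ)
        + (1 - Real.cos (b * u)) * u ^ (-1 - γ))
      (g := fun u : ℝ => (1 - Real.cos ((a - b) * u)) * u ^ (-1 - γ))
      (by exact hA.add hB) hC,
    MeasureTheory.integral_add
      (f := fun u : ℝ => (1 - Real.cos (a * u)) * u ^ (-1 - γ))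
      (g := fun u : ℝ => (1 - Real.cos (b * u)) * u ^ (-1 - γ)) hA hB,
    integral_gker hγ0 a, integral_gker hγ0 b, integral_gker hγ0 (a - b), Psi]
  ring

lemma psi_quad_nonneg {γ : ℝ} (hγ0 : 0 < γ) (hγ2 : γ < 2) {k : ℕ} (s x : Fin k → ℝ) :
    0 ≤ ∑ i, ∑ j, x i * x j * Psi γ (s i) (s j) := by
  have hCpos := Cgam_pos hγ0 hγ2
  set F : Fin k × Fin k → ℝ → ℝ := fun p u =>
    x p.1 * x p.2 * ((1/2) * ((1 - Real.cos (s p.1 * u)) * u ^ (-1 - γ)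
      + (1 - Real.cos (s p.2 * u)) * u ^ (-1 - γ)
      - (1 - Real.cos ((s p.1 - s p.2) * u)) * u ^ (-1 - γ))) with hF
  have hFint : ∀ p : Fin k × Fin k, IntegrableOn (F p) (Set.Ioi 0) := by
    intro p
    exact (((((integrable_gker hγ0 hγ2 (s p.1)).add (integrable_gker hγ0 hγ2 (s p.2))).sub
      (integrable_gker hγ0 hγ2 (s p.1 - s p.2))).const_mul (1/2)).const_mul (x p.1 * x p.2))
  have hmul : Cgam γ * ∑ i, ∑ j, x i * x j * Psi γ (s i) (s j)
      = ∫ u in Set.Ioi (0:ℝ), ∑ p : Fin k × Fin k, F p u := by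
    have hswap : ∑ i, ∑ j, x i * x j * Psi γ (s i) (s j)
        = ∑ p : Fin k × Fin k, x p.1 * x p.2 * Psi γ (s p.1) (s p.2) :=
      (Fintype.sum_prod_type (f := fun p : Fin k × Fin k =>
        x p.1 * x p.2 * Psi γ (s p.1) (s p.2))).symm
    rw [hswap, Finset.mul_sum, MeasureTheory.integral_finset_sum _ (fun p _ => hFint p)]
    refine Finset.sum_congr rfl fun p _ => ?_
    have : Cgam γ * (x p.1 * x p.2 * Psi γ (s p.1) (s p.2))
        = x p.1 * x p.2 * (Cgam γ * Psi γ (s p.1) (s p.2)) := by ring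
    rw [this, key_rep hγ0 hγ2, ← MeasureTheory.integral_const_mul]
  have hnn : 0 ≤ ∫ u in Set.Ioi (0:ℝ), ∑ p : Fin k × Fin k, F p u := by
    refine setIntegral_nonneg measurableSet_Ioi fun u hu => ?_
    have hu0 : (0:ℝ) < u := hu
    have hw : (0:ℝ) ≤ u ^ (-1 - γ) := Real.rpow_nonneg hu0.le _
    have hpt : ∀ p : Fin k × Fin k, F p u
        = (1/2) * u ^ (-1 - γ) * (x p.1 * x p.2 *
            ((1 - Real.cos (s p.1 * u)) * (1 - Real.cos (s p.2 * u))
              + Real.sin (s p.1 * u) * Real.sin (s p.2 * u))) := by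
      intro p
      rw [hF]
      have hsm : (s p.1 - s p.2) * u = s p.1 * u - s p.2 * u := by ring
      simp only [hsm, Real.cos_sub]
      ring
    have sum_eq : ∑ p : Fin k × Fin k, F p u
        = (1/2) * u ^ (-1 - γ) * ((∑ i, x i * (1 - Real.cos (s i * u))) ^ 2
            + (∑ i, x i * Real.sin (s i * u)) ^ 2) := by
      rw [← quad_sum_sq x (fun i => 1 - Real.cos (s i * u)) (fun i => Real.sin (s i * u))]
      rw [show ∑ p : Fin k × Fin k, F p u = ∑ i, ∑ j, F (i, j) u from Fintype.sum_prod_type _]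
      simp_rw [hpt]
      simp_rw [Finset.mul_sum]
    rw [sum_eq]
    positivity
  have hres := hmul ▸ hnn
  nlinarith

lemma sum4_swap {k : ℕ} (T : Fin k → Fin k → Fin k → Fin k → ℝ) :
    ∑ i, ∑ j, ∑ l, ∑ m, T i j l m = ∑ l, ∑ m, ∑ i, ∑ j, T i j l m :=
  calc ∑ i, ∑ j, ∑ l, ∑ m, T i j l m
      = ∑ i, ∑ l, ∑ j, ∑ m, T i j l m :=
        Finset.sum_congr rfl (fun i _ => Finset.sum_comm)
    _ = ∑ l, ∑ i, ∑ j, ∑ m, T i j l m := Finset.sum_comm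
    _ = ∑ l, ∑ i, ∑ m, ∑ j, T i j l m :=
        Finset.sum_congr rfl (fun l _ =>
          Finset.sum_congr rfl (fun i _ => Finset.sum_comm))
    _ = ∑ l, ∑ m, ∑ i, ∑ j, T i j l m :=
        Finset.sum_congr rfl (fun l _ => Finset.sum_comm)

lemma schur_sq {k : ℕ} (x : Fin k → ℝ) (B : Matrix (Fin k) (Fin k) ℝ) :
    0 ≤ ∑ i, ∑ j, x i * x j * ((Bᴴ * B) i j) ^ 2 := by
  have hexp : ∀ i j : Fin k, ((Bᴴ * B) i j) ^ 2
      = ∑ l, ∑ m, (B l i * B l j) * (B m i * B m j) := by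
    intro i j
    rw [Matrix.mul_apply]
    simp only [Matrix.conjTranspose_apply, star_trivial]
    rw [sq, Finset.sum_mul_sum]
  have key : ∑ i, ∑ j, x i * x j * ((Bᴴ * B) i j) ^ 2
      = ∑ l, ∑ m, (∑ i, x i * B l i * B m i) ^ 2 := by
    calc ∑ i, ∑ j, x i * x j * ((Bᴴ * B) i j) ^ 2
        = ∑ i, ∑ j, ∑ l, ∑ m, (x i * B l i * B m i) * (x j * B l j * B m j) := by
          refine Finset.sum_congr rfl fun i _ => Finset.sum_congr rfl fun j _ => ?_
          rw [hexp i j, Finset.mul_sum]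
          refine Finset.sum_congr rfl fun l _ => ?_
          rw [Finset.mul_sum]
          exact Finset.sum_congr rfl fun m _ => by ring
      _ = ∑ l, ∑ m, ∑ i, ∑ j, (x i * B l i * B m i) * (x j * B l j * B m j) := sum4_swap _
      _ = ∑ l, ∑ m, (∑ i, x i * B l i * B m i) ^ 2 := by
          refine Finset.sum_congr rfl fun l _ => Finset.sum_congr rfl fun m _ => ?_
          rw [sq, Finset.sum_mul_sum]
  rw [key]
  exact Finset.sum_nonneg fun l _ => Finset.sum_nonneg fun m _ => sq_nonneg _

lemma psi_symm (γ a b : ℝ) : Psi γ a b = Psi γ b a := by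
  unfold Psi; rw [abs_sub_comm]; ring

lemma psi_sq_quad_nonneg {γ : ℝ} (hγ0 : 0 < γ) (hγ2 : γ < 2) {k : ℕ} (s x : Fin k → ℝ) :
    0 ≤ ∑ i, ∑ j, x i * x j * (Psi γ (s i) (s j)) ^ 2 := by
  set M : Matrix (Fin k) (Fin k) ℝ := Matrix.of fun i j => Psi γ (s i) (s j) with hM
  have hherm : M.IsHermitian := by
    ext i j
    simp only [hM, Matrix.conjTranspose_apply, Matrix.of_apply, star_trivial]
    exact psi_symm γ (s j) (s i)
  have hpsd : M.PosSemidef := by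
    refine Matrix.PosSemidef.of_dotProduct_mulVec_nonneg hherm fun y => ?_
    have : dotProduct (star y) (M *ᵥ y) = ∑ i, ∑ j, y i * y j * Psi γ (s i) (s j) := by
      simp only [dotProduct, Matrix.mulVec, star_trivial, Pi.star_apply,
        Finset.mul_sum, hM, Matrix.of_apply]
      exact Finset.sum_congr rfl fun i _ => Finset.sum_congr rfl fun j _ => by ring
    rw [this]
    exact psi_quad_nonneg hγ0 hγ2 s y
  obtain ⟨B, hB⟩ : ∃ B : Matrix (Fin k) (Fin k) ℝ, M = Bᴴ * B := by
    open scoped MatrixOrder in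
    obtain ⟨B, hB⟩ := CStarAlgebra.nonneg_iff_eq_star_mul_self.mp hpsd.nonneg
    exact ⟨B, by rw [hB, Matrix.star_eq_conjTranspose]⟩
  have := schur_sq x B
  rw [← hB] at this
  simpa only [hM, Matrix.of_apply] using this

lemma re_form {k : ℕ} (v : Fin k → ℂ) (c : Fin k → Fin k → ℝ)
    (h : ∀ x : Fin k → ℝ, 0 ≤ ∑ i, ∑ j, x i * x j * c i j) :
    0 ≤ (∑ i, ∑ j, v i * (starRingEnd ℂ) (v j) * ((c i j : ℝ) : ℂ)).re := by
  have hre : (∑ i : Fin k, ∑ j : Fin k, v i * (starRingEnd ℂ) (v j) * ((c i j : ℝ) : ℂ)).re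
      = (∑ i, ∑ j, (v i).re * (v j).re * c i j)
        + (∑ i, ∑ j, (v i).im * (v j).im * c i j) := by
    rw [Complex.re_sum, ← Finset.sum_add_distrib]
    refine Finset.sum_congr rfl fun i _ => ?_
    rw [Complex.re_sum, ← Finset.sum_add_distrib]
    refine Finset.sum_congr rfl fun j _ => ?_
    simp only [Complex.mul_re, Complex.mul_im, Complex.conj_re, Complex.conj_im,
      Complex.ofReal_re, Complex.ofReal_im]
    ring
  rw [hre]
  exact add_nonneg (h fun i => (v i).re) (h fun i => (v i).im)

theorem gamma2_nonneg' (γ : ℝ) (hγ : γ ∈ Set.Ioo (0 : ℝ) 2)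
    (k : ℕ) (s : Fin k → ℝ) (hs : ∀ i, 0 ≤ s i) :
    (∀ v : Fin k → ℂ,
      0 ≤ (∑ i : Fin k, ∑ j : Fin k,
        v i * (starRingEnd ℂ) (v j) * ((Psi γ (s i) (s j) : ℝ) : ℂ)).re) ∧
    (∀ v : Fin k → ℂ,
      0 ≤ (∑ i : Fin k, ∑ j : Fin k,
        v i * (starRingEnd ℂ) (v j) * ((Psi γ (s i) (s j) : ℝ) : ℂ) ^ 2).re) ∧
    (∀ (N : ℕ) (a : Fin N → ℂ) (x : ℝ),
      0 ≤ (∑ n : Fin N, ∑ m : Fin N,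
        a n * (starRingEnd ℂ) (a m) *
          Complex.exp (Complex.I * ((((n : ℕ) + 1 : ℝ) - ((m : ℕ) + 1 : ℝ) : ℝ) : ℂ) * (x : ℂ)) *
          ((Psi γ ((n : ℕ) + 1) ((m : ℕ) + 1) : ℝ) : ℂ) ^ 2).re) := by
  obtain ⟨hγ0, hγ2⟩ := hγ
  have sq_form : ∀ (k' : ℕ) (s' : Fin k' → ℝ) (v : Fin k' → ℂ),
      0 ≤ (∑ i : Fin k', ∑ j : Fin k',
        v i * (starRingEnd ℂ) (v j) * ((Psi γ (s' i) (s' j) : ℝ) : ℂ) ^ 2).re := by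
    intro k' s' v
    have := re_form v (fun i j => (Psi γ (s' i) (s' j)) ^ 2)
      (fun x => psi_sq_quad_nonneg hγ0 hγ2 s' x)
    simpa only [Complex.ofReal_pow] using this
  refine ⟨fun v => re_form v _ (fun x => psi_quad_nonneg hγ0 hγ2 s x), sq_form k s, ?_⟩
  intro N a x
  have key := sq_form N (fun n => (n : ℝ) + 1)
    (fun n => a n * Complex.exp (Complex.I * (((n : ℝ) + 1 : ℝ) : ℂ) * (x : ℂ)))
  have heq : ∑ n : Fin N, ∑ m : Fin N,
        a n * (starRingEnd ℂ) (a m) *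
          Complex.exp (Complex.I * ((((n : ℕ) + 1 : ℝ) - ((m : ℕ) + 1 : ℝ) : ℝ) : ℂ) * (x : ℂ)) *
          ((Psi γ ((n : ℕ) + 1) ((m : ℕ) + 1) : ℝ) : ℂ) ^ 2
      = ∑ n : Fin N, ∑ m : Fin N,
        (a n * Complex.exp (Complex.I * (((n : ℝ) + 1 : ℝ) : ℂ) * (x : ℂ)))
          * (starRingEnd ℂ) (a m * Complex.exp (Complex.I * (((m : ℝ) + 1 : ℝ) : ℂ) * (x : ℂ)))
          * ((Psi γ (((n : ℕ) : ℝ) + 1) (((m : ℕ) : ℝ) + 1) : ℝ) : ℂ) ^ 2 := by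
    refine Finset.sum_congr rfl fun n _ => Finset.sum_congr rfl fun m _ => ?_
    have hconj : (starRingEnd ℂ) (Complex.exp (Complex.I * (((m : ℝ) + 1 : ℝ) : ℂ) * (x : ℂ)))
        = Complex.exp (-(Complex.I * (((m : ℝ) + 1 : ℝ) : ℂ) * (x : ℂ))) := by
      rw [← Complex.exp_conj]
      congr 1
      simp only [_root_.map_mul, Complex.conj_I, Complex.conj_ofReal]
      ring
    rw [_root_.map_mul, hconj]
    rw [show (a n * Complex.exp (Complex.I * (((n : ℝ) + 1 : ℝ) : ℂ) * (x : ℂ)))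
          * ((starRingEnd ℂ) (a m) * Complex.exp (-(Complex.I * (((m : ℝ) + 1 : ℝ) : ℂ) * (x : ℂ))))
          * ((Psi γ (((n : ℕ) : ℝ) + 1) (((m : ℕ) : ℝ) + 1) : ℝ) : ℂ) ^ 2
        = a n * (starRingEnd ℂ) (a m)
          * (Complex.exp (Complex.I * (((n : ℝ) + 1 : ℝ) : ℂ) * (x : ℂ))
              * Complex.exp (-(Complex.I * (((m : ℝ) + 1 : ℝ) : ℂ) * (x : ℂ))))
          * ((Psi γ (((n : ℕ) : ℝ) + 1) (((m : ℕ) : ℝ) + 1) : ℝ) : ℂ) ^ 2 from by ring]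
    rw [← Complex.exp_add]
    congr 2
    push_cast
    ring
  rw [heq]
  exact key

/-- **Positive semidefiniteness of the carré du champ kernel and its Hadamard
square; CD(0,∞) on positive-frequency polynomials.** For nonnegative arguments
`s : Fin k → ℝ`, the matrix `Ψ_γ(sᵢ,sⱼ)` is positive semidefinite, its
entrywise square `Ψ_γ(sᵢ,sⱼ)²` is positive semidefinite, and consequently
`Γ_{γ,2}(f,f)(x) ≥ 0` for every positive-frequency trigonometric polynomial
`f = ∑ aₙ e^{inx}`. -/
theorem gamma2_nonneg (γ : ℝ) (hγ : γ ∈ Set.Ioo (0 : ℝ) 2)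
    (k : ℕ) (s : Fin k → ℝ) (hs : ∀ i, 0 ≤ s i) :
    (∀ v : Fin k → ℂ,
      0 ≤ (∑ i : Fin k, ∑ j : Fin k,
        v i * (starRingEnd ℂ) (v j) * ((Psi γ (s i) (s j) : ℝ) : ℂ)).re) ∧
    (∀ v : Fin k → ℂ,
      0 ≤ (∑ i : Fin k, ∑ j : Fin k,
        v i * (starRingEnd ℂ) (v j) * ((Psi γ (s i) (s j) : ℝ) : ℂ) ^ 2).re) ∧
    (∀ (N : ℕ) (a : Fin N → ℂ) (x : ℝ),
      0 ≤ (∑ n : Fin N, ∑ m : Fin N,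
        a n * (starRingEnd ℂ) (a m) *
          Complex.exp (Complex.I * ((((n : ℕ) + 1 : ℝ) - ((m : ℕ) + 1 : ℝ) : ℝ) : ℂ) * (x : ℂ)) *
          ((Psi γ ((n : ℕ) + 1) ((m : ℕ) + 1) : ℝ) : ℂ) ^ 2).re) :=
  gamma2_nonneg' γ hγ k s hs
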